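/- Let ψ be a reconciliation map for (P,H,φ) and let w be an interior vertex of P such that ψ(w) ≻_H m(w) and ψ(w) ≠ ψ(v') for all children v' of w. Then the map ψ^down_w, which sends w to the unique vertex in A(w) ∩ Ch(ψ(w)) (the child of ψ(w) lying on the path from ρ_H to m(w)) and agrees with ψ elsewhere, is again a reconciliation map for (P,H,φ). -/
import Mathlib


open Classical

namespace Recon

/-- `Anc p u v` : `u` is above or equal to `v` (i.e. `u` is an ancestor of `v`)
with respect to the parent map `p` of a rooted tree. -/
def Anc {V : Type*} (p : V → V) (u v : V) : Prop := ∃ n : ℕ, p^[n] v = u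

/-- `u` is strictly above `v`. -/
def SAnc {V : Type*} (p : V → V) (u v : V) : Prop := Anc p u v ∧ u ≠ v

/-- The length of the (undirected) path between `u` and `v` in the tree with parent map `p`. -/
noncomputable def tdist {V : Type*} (p : V → V) (u v : V) : ℕ :=
  sInf {k : ℕ | ∃ n m : ℕ, n + m = k ∧ p^[n] u = p^[m] v}

/-- `p` is the parent map of a rooted tree on `V` with root `r` and depth function `dp`. -/
structure IsRootedTree {V : Type*} (p : V → V) (r : V) (dp : V → ℕ) : Prop where
  parent_root : p r = r
  depth_root : dp r = 0
  depth_parent : ∀ v, v ≠ r → dp v = dp (p v) + 1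

/-- `v` is a leaf: it has no children. -/
def IsLeaf {V : Type*} (p : V → V) (v : V) : Prop := ∀ u, p u = v → u = v

/-- `u` is a child of `v`. -/
def IsChild {V : Type*} (p : V → V) (u v : V) : Prop := p u = v ∧ u ≠ v

/-- every non-leaf vertex has exactly two children (binary tree). -/
def IsBinary {V : Type*} (p : V → V) : Prop :=
  ∀ v, ¬ IsLeaf p v →
    ∃ u w, u ≠ w ∧ IsChild p u v ∧ IsChild p w v ∧ ∀ z, IsChild p z v → z = u ∨ z = w

/-- `w` is a least common ancestor of the set `S`. -/
def IsLCA {V : Type*} (p : V → V) (S : Set V) (w : V) : Prop :=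
  (∀ s ∈ S, Anc p w s) ∧ ∀ w', (∀ s ∈ S, Anc p w' s) → Anc p w' w

/-- The set `A(v)`: all vertices on the path from the root `r` down to `mv`. -/
def ASet {V : Type*} (p : V → V) (r : V) (mv : V) : Set V :=
  {w | Anc p r w ∧ Anc p w mv}

/-- `ψ` is a reconciliation map for `(P,H,φ)`: it restricts to `φ` on the leaves of `P`,
and the image of a vertex is above or equal to the image of each of its children. -/
def IsRecon {VP VH : Type*} (pP : VP → VP) (pH : VH → VH) (φ ψ : VP → VH) : Prop :=
  (∀ x, IsLeaf pP x → ψ x = φ x) ∧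
  ∀ v v', IsChild pP v' v → Anc pH (ψ v) (ψ v')

/-- The path-distance between two maps `V(P) → V(H)`. -/
noncomputable def dpath {VP VH : Type*} [Fintype VP] (pH : VH → VH) (ψ ψ' : VP → VH) : ℕ :=
  ∑ v : VP, tdist pH (ψ v) (ψ' v)

/-- One edit (up or down) operation transforming `ψ` into `ψ'`. -/
def EditStep {VP VH : Type*} [DecidableEq VP] (pP : VP → VP) (pH : VH → VH) (rH : VH)
    (m : VP → VH) (ψ ψ' : VP → VH) : Prop :=
  ∃ w : VP,
    (ψ w ≠ rH ∧ ψ w ≠ ψ (pP w) ∧ ψ' = Function.update ψ w (pH (ψ w))) ∨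
    (¬ IsLeaf pP w ∧ SAnc pH (ψ w) (m w) ∧ (∀ v', IsChild pP v' w → ψ w ≠ ψ v') ∧
      ∃ c, IsChild pH c (ψ w) ∧ c ∈ ASet pH rH (m w) ∧ ψ' = Function.update ψ w c)

/-- The edit distance: the least number of up/down operations transforming `ψ` into `ψ'`. -/
noncomputable def editDist {VP VH : Type*} [DecidableEq VP] (pP : VP → VP) (pH : VH → VH)
    (rH : VH) (m : VP → VH) (ψ ψ' : VP → VH) : ℕ :=
  sInf {n : ℕ | ∃ f : ℕ → VP → VH, f 0 = ψ ∧ f n = ψ' ∧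
    ∀ i < n, EditStep pP pH rH m (f i) (f (i + 1))}

/-- The median of a multiset of reals. -/
noncomputable def med (A : Multiset ℝ) : ℝ :=
  if A.card % 2 = 1 then (A.sort (· ≤ ·)).getD (A.card / 2) 0
  else ((A.sort (· ≤ ·)).getD (A.card / 2 - 1) 0 + (A.sort (· ≤ ·)).getD (A.card / 2) 0) / 2

/-- The median of a multiset of integers, rounded to the nearest integer (halves up). -/
noncomputable def zmed (A : Multiset ℤ) : ℤ :=
  round (med (A.map (fun z => (z : ℝ))))


lemma anc_refl {V : Type*} (p : V → V) (v : V) : Anc p v v := ⟨0, rfl⟩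

lemma anc_trans {V : Type*} {p : V → V} {u v x : V} (h1 : Anc p u v) (h2 : Anc p v x) :
    Anc p u x := by
  obtain ⟨a, ha⟩ := h1; obtain ⟨b, hb⟩ := h2
  exact ⟨a + b, by rw [Function.iterate_add_apply, hb, ha]⟩

lemma dp_iter {V : Type*} {p : V → V} {r : V} {dp : V → ℕ} (h : IsRootedTree p r dp) :
    ∀ n (v : V), dp (p^[n] v) ≤ dp v ∧ (dp (p^[n] v) = dp v → p^[n] v = v) := by
  intro n
  induction n with
  | zero => intro v; simp
  | succ n ih =>
    intro v
    rw [Function.iterate_succ_apply']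
    obtain ⟨hle, heq⟩ := ih v
    by_cases hur : p^[n] v = r
    · rw [hur, h.parent_root, h.depth_root]
      constructor
      · omega
      · intro he
        have h0 : dp (p^[n] v) = dp v := by rw [hur, h.depth_root]; omega
        have := heq h0
        rw [this] at hur
        exact hur.symm
    · have := h.depth_parent _ hur
      constructor
      · omega
      · intro he; omega

lemma anc_antisymm {V : Type*} {p : V → V} {r : V} {dp : V → ℕ} (h : IsRootedTree p r dp)
    {u v : V} (h1 : Anc p u v) (h2 : Anc p v u) : u = v := by
  obtain ⟨a, ha⟩ := h1; obtain ⟨b, hb⟩ := h2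
  have l1 := dp_iter h a v
  have l2 := dp_iter h b u
  rw [ha] at l1; rw [hb] at l2
  have : dp (p^[a] v) = dp v := by rw [ha]; omega
  have := (dp_iter h a v).2 this
  rw [ha] at this; exact this

lemma anc_comparable {V : Type*} {p : V → V} {u v x : V} (h1 : Anc p u x) (h2 : Anc p v x) :
    Anc p u v ∨ Anc p v u := by
  obtain ⟨a, ha⟩ := h1; obtain ⟨b, hb⟩ := h2
  rcases le_total a b with hab | hab
  · right
    refine ⟨b - a, ?_⟩
    rw [← ha, ← Function.iterate_add_apply]
    rw [Nat.sub_add_cancel hab, hb]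
  · left
    refine ⟨a - b, ?_⟩
    rw [← hb, ← Function.iterate_add_apply]
    rw [Nat.sub_add_cancel hab, ha]

lemma recon_anc_leaf {VP VH : Type*} {pP : VP → VP} {pH : VH → VH} {φ ψ : VP → VH}
    (hψ : IsRecon pP pH φ ψ) :
    ∀ n (x v : VP), IsLeaf pP x → pP^[n] x = v → Anc pH (ψ v) (φ x) := by
  intro n
  induction n with
  | zero =>
    intro x v hx hv
    simp only [Function.iterate_zero, id] at hv
    subst hv
    rw [hψ.1 x hx]
    exact anc_refl _ _
  | succ n ih =>
    intro x v hx hv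
    rw [Function.iterate_succ_apply'] at hv
    by_cases he : pP^[n] x = v
    · exact ih x v hx he
    · have hchild : IsChild pP (pP^[n] x) v := ⟨hv, he⟩
      exact anc_trans (hψ.2 v _ hchild) (ih x _ hx rfl)

lemma recon_anc_m {VP VH : Type*} {pP : VP → VP} {pH : VH → VH} {φ ψ : VP → VH}
    (hψ : IsRecon pP pH φ ψ) (m : VP → VH)
    (hm : ∀ v, IsLCA pH {h | ∃ x, IsLeaf pP x ∧ Anc pP v x ∧ φ x = h} (m v)) (v : VP) :
    Anc pH (ψ v) (m v) := by
  apply (hm v).2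
  rintro s ⟨x, hx, ⟨n, hn⟩, rfl⟩
  exact recon_anc_leaf hψ n x v hx hn

theorem stmt5 [DecidableEq VP] {VP VH : Type*} (pP : VP → VP) (pH : VH → VH) (rP : VP) (rH : VH)
    (dpP : VP → ℕ) (dpH : VH → ℕ)
    (hP : IsRootedTree pP rP dpP) (hH : IsRootedTree pH rH dpH)
    (hbP : IsBinary pP) (hbH : IsBinary pH)
    (φ : VP → VH) (hφ : ∀ x, IsLeaf pP x → IsLeaf pH (φ x))
    (m : VP → VH)
    (hm : ∀ v, IsLCA pH {h | ∃ x, IsLeaf pP x ∧ Anc pP v x ∧ φ x = h} (m v))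
    (ψ : VP → VH) (hψ : IsRecon pP pH φ ψ) (w : VP) (hw : ¬ IsLeaf pP w)
    (h1 : SAnc pH (ψ w) (m w))
    (h2 : ∀ v', IsChild pP v' w → ψ w ≠ ψ v')
    (c : VH) (hc1 : IsChild pH c (ψ w)) (hc2 : c ∈ ASet pH rH (m w)) :
    IsRecon pP pH φ (Function.update ψ w c) := by
  constructor
  · intro x hx
    have hxw : x ≠ w := fun h => hw (h ▸ hx)
    rw [Function.update_of_ne hxw]
    exact hψ.1 x hx
  · intro v v' hchild
    by_cases hvw : v = w
    · subst hvw
      have hv'w : v' ≠ v := hchild.2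
      rw [Function.update_self, Function.update_of_ne hv'w]
      -- main case: need Anc pH c (ψ v')
      have hmm : Anc pH (m v) (m v') := by
        apply (hm v').2
        rintro s ⟨x, hx, ⟨n, hn⟩, rfl⟩
        exact (hm v).1 _ ⟨x, hx, ⟨n + 1, by
          rw [Function.iterate_succ_apply', hn, hchild.1]⟩, rfl⟩
      have hcm : Anc pH c (m v') := anc_trans hc2.2 hmm
      have hψm : Anc pH (ψ v') (m v') := recon_anc_m hψ m hm v'
      rcases anc_comparable hcm hψm with h | h
      · exact h
      · obtain ⟨k, hk⟩ := h
        cases k with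
        | zero => simp only [Function.iterate_zero, id] at hk; rw [← hk]; exact anc_refl _ _
        | succ j =>
          exfalso
          rw [Function.iterate_succ_apply, hc1.1] at hk
          have : Anc pH (ψ v') (ψ v) := ⟨j, hk⟩
          have := anc_antisymm hH (hψ.2 v v' hchild) this
          exact h2 v' hchild this
    · rw [Function.update_of_ne hvw]
      by_cases hv'w : v' = w
      · subst hv'w
        rw [Function.update_self]
        have h3 : Anc pH (ψ v) (ψ v') := hψ.2 v v' hchild
        have h4 : Anc pH (ψ v') c := ⟨1, by simp [hc1.1]⟩
        exact anc_trans h3 h4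
      · rw [Function.update_of_ne hv'w]
        exact hψ.2 v v' hchild


end Recon
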